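/- Let (W_n) be a sequence of random vectors in ℝⁿ with w_n = ‖W_n‖, m_n = √E[w_n²], Σ_n² = n·Var(w_n²). Suppose there exist constants b > 0 and C such that b < m_n for all n, and m_n ≤ C, n²·E[(w_n² - m_n²)³] ≤ C in absolute value, and n²·E[(w_n² - m_n²)^4] ≤ C for all n (i.e., (W_n) is balanced). Then E[w_n] = m_n - Σ_n²/(8n·m_n³) + O(n⁻²), i.e., there exist constants K and N such that |E[w_n] - m_n + Σ_n²/(8n·m_n³)| ≤ K/n² for all n ≥ N. -/

import Mathlib

open MeasureTheory

lemma sqrt_taylor_key (s a : ℝ) (hs : 0 < s) (ha : 0 ≤ a) :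
    |a - (s + (a^2 - s^2)/(2*s) - (a^2 - s^2)^2/(8*s^3) + (a^2 - s^2)^3/(16*s^5))|
      ≤ (a^2 - s^2)^4 / s^7 := by
  have h1 : a - (s + (a^2 - s^2)/(2*s) - (a^2 - s^2)^2/(8*s^3) + (a^2 - s^2)^3/(16*s^5))
      = -((a-s)^4 * (a^2 + 4*a*s + 5*s^2)) / (16*s^5) := by
    field_simp
    ring
  have hc : (0:ℝ) ≤ (a-s)^4 * (a^2 + 4*a*s + 5*s^2) := by positivity
  rw [h1, abs_div, abs_neg, abs_of_nonneg hc, abs_of_nonneg (by positivity : (0:ℝ) ≤ 16*s^5),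
    div_le_div_iff₀ (by positivity) (by positivity)]
  have h3 : (a^2 + 4*a*s + 5*s^2) * s^2 ≤ 16*(a+s)^4 := by
    nlinarith [mul_nonneg ha hs.le, sq_nonneg a, sq_nonneg s, mul_nonneg (mul_nonneg ha ha) (mul_nonneg ha hs.le), mul_nonneg (mul_nonneg ha hs.le) (mul_nonneg hs.le hs.le), mul_nonneg (mul_nonneg ha ha) (mul_nonneg hs.le hs.le), pow_pos hs 4]
  calc (a-s)^4 * (a^2 + 4*a*s + 5*s^2) * s^7
      = ((a^2 + 4*a*s + 5*s^2) * s^2) * ((a-s)^4 * s^5) := by ring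
    _ ≤ (16*(a+s)^4) * ((a-s)^4 * s^5) := by
        exact mul_le_mul_of_nonneg_right h3 (by positivity)
    _ = (a^2 - s^2)^4 * (16*s^5) := by ring

/-- For a balanced sequence of random vectors `W_n` in `ℝⁿ`, the expected norm
satisfies `E[w_n] = m_n - Σ_n²/(8n·m_n³) + O(n⁻²)`, where `w_n = ‖W_n‖`,
`m_n = √E[w_n²]` and `Σ_n² = n·Var(w_n²)`. -/
theorem expected_norm_estimate
    {Ω : Type*} [MeasurableSpace Ω] (μ : Measure Ω) [IsProbabilityMeasure μ]
    (W : (n : ℕ) → Ω → EuclideanSpace ℝ (Fin n))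
    (w : ℕ → Ω → ℝ) (hw : ∀ n ω, w n ω = ‖W n ω‖)
    (hint : ∀ n, ∀ k ≤ 8, Integrable (fun ω => (w n ω)^k) μ)
    (m : ℕ → ℝ) (hm : ∀ n, m n = Real.sqrt (∫ ω, (w n ω)^2 ∂μ))
    (b C : ℝ) (hb : 0 < b)
    (hbm : ∀ n, 1 ≤ n → b < m n)
    (hmC : ∀ n, 1 ≤ n → m n ≤ C)
    (hmu3 : ∀ n : ℕ, 1 ≤ n → |(n:ℝ)^2 * ∫ ω, ((w n ω)^2 - (m n)^2)^3 ∂μ| ≤ C)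
    (hmu4 : ∀ n : ℕ, 1 ≤ n → (n:ℝ)^2 * ∫ ω, ((w n ω)^2 - (m n)^2)^4 ∂μ ≤ C) :
    ∃ K N : ℕ, ∀ n ≥ N,
      |(∫ ω, w n ω ∂μ) - m n
          + ((n:ℝ) * ∫ ω, ((w n ω)^2 - (m n)^2)^2 ∂μ) / (8 * (n:ℝ) * (m n)^3)|
        ≤ (K:ℝ) / (n:ℝ)^2 := by
  have hC : 0 < C := lt_of_lt_of_le (lt_trans hb (hbm 1 le_rfl)) (hmC 1 le_rfl)
  refine ⟨⌈C/b^7 + C/b^5⌉₊, 1, fun n hn => ?_⟩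
  set s := m n with hsdef
  have hs : 0 < s := lt_trans hb (hbm n hn)
  have hn0 : ((n:ℝ)) ≠ 0 := Nat.cast_ne_zero.mpr (by omega)
  have hn2 : (0:ℝ) < (n:ℝ)^2 := by positivity
  -- basic integrability
  have hIw : Integrable (w n) μ := by
    have := hint n 1 (by norm_num); simpa using this
  have hI2 : Integrable (fun ω => (w n ω)^2) μ := hint n 2 (by norm_num)
  have hJ1 : Integrable (fun ω => (w n ω)^2 - s^2) μ := hI2.sub (integrable_const _)
  have hJ2 : Integrable (fun ω => ((w n ω)^2 - s^2)^2) μ := by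
    have h : (fun ω => ((w n ω)^2 - s^2)^2)
        = fun ω => (w n ω)^4 - (2*s^2) * (w n ω)^2 + s^4 := by funext ω; ring
    rw [h]
    exact ((hint n 4 (by norm_num)).sub ((hint n 2 (by norm_num)).const_mul _)).add
      (integrable_const _)
  have hJ3 : Integrable (fun ω => ((w n ω)^2 - s^2)^3) μ := by
    have h : (fun ω => ((w n ω)^2 - s^2)^3)
        = fun ω => (w n ω)^6 - (3*s^2) * (w n ω)^4 + (3*s^4) * (w n ω)^2 - s^6 := by
      funext ω; ring
    rw [h]
    exact (((hint n 6 (by norm_num)).sub ((hint n 4 (by norm_num)).const_mul _)).add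
      ((hint n 2 (by norm_num)).const_mul _)).sub (integrable_const _)
  have hJ4 : Integrable (fun ω => ((w n ω)^2 - s^2)^4) μ := by
    have h : (fun ω => ((w n ω)^2 - s^2)^4)
        = fun ω => (w n ω)^8 - (4*s^2) * (w n ω)^6 + (6*s^4) * (w n ω)^4
            - (4*s^6) * (w n ω)^2 + s^8 := by funext ω; ring
    rw [h]
    exact ((((hint n 8 (by norm_num)).sub ((hint n 6 (by norm_num)).const_mul _)).add
      ((hint n 4 (by norm_num)).const_mul _)).sub
      ((hint n 2 (by norm_num)).const_mul _)).add (integrable_const _)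
  -- the approximating function
  set A : Ω → ℝ := fun ω => s + ((w n ω)^2 - s^2)/(2*s) - ((w n ω)^2 - s^2)^2/(8*s^3)
      + ((w n ω)^2 - s^2)^3/(16*s^5) with hA
  have hIA : Integrable A μ :=
    (((integrable_const s).add (hJ1.div_const _)).sub (hJ2.div_const _)).add (hJ3.div_const _)
  have hs2 : s^2 = ∫ ω, (w n ω)^2 ∂μ := by
    rw [hsdef, hm n]
    exact Real.sq_sqrt (integral_nonneg fun ω => sq_nonneg _)
  have hμ1 : ∫ ω, ((w n ω)^2 - s^2) ∂μ = 0 := by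
    rw [integral_sub hI2 (integrable_const _), integral_const]
    simp [← hs2]
  have hT1 : Integrable (fun ω => s + ((w n ω)^2 - s^2)/(2*s)) μ :=
    (integrable_const s).add (hJ1.div_const _)
  have hT2 : Integrable (fun ω => s + ((w n ω)^2 - s^2)/(2*s)
      - ((w n ω)^2 - s^2)^2/(8*s^3)) μ := hT1.sub (hJ2.div_const _)
  have hiA : ∫ ω, A ω ∂μ
      = s + (∫ ω, ((w n ω)^2 - s^2) ∂μ)/(2*s) - (∫ ω, ((w n ω)^2 - s^2)^2 ∂μ)/(8*s^3)
        + (∫ ω, ((w n ω)^2 - s^2)^3 ∂μ)/(16*s^5) := by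
    show (∫ ω, (s + ((w n ω)^2 - s^2)/(2*s) - ((w n ω)^2 - s^2)^2/(8*s^3)
        + ((w n ω)^2 - s^2)^3/(16*s^5)) ∂μ) = _
    rw [integral_add hT2 (hJ3.div_const _),
      integral_sub hT1 (hJ2.div_const _),
      integral_add (integrable_const s) (hJ1.div_const _),
      integral_const, integral_div, integral_div, integral_div]
    simp
  -- pointwise bound and integral bound
  have hpt : ∀ ω, |w n ω - A ω| ≤ ((w n ω)^2 - s^2)^4 / s^7 := by
    intro ω
    exact sqrt_taylor_key s (w n ω) hs (by rw [hw]; positivity)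
  have hdiff : Integrable (fun ω => w n ω - A ω) μ := hIw.sub hIA
  have habs : |∫ ω, (w n ω - A ω) ∂μ| ≤ (∫ ω, ((w n ω)^2 - s^2)^4 ∂μ) / s^7 := by
    calc |∫ ω, (w n ω - A ω) ∂μ| ≤ ∫ ω, |w n ω - A ω| ∂μ := by
          rw [← Real.norm_eq_abs]
          exact (norm_integral_le_integral_norm _).trans (le_of_eq (by
            simp [Real.norm_eq_abs]))
      _ ≤ ∫ ω, ((w n ω)^2 - s^2)^4 / s^7 ∂μ :=
          integral_mono hdiff.abs (hJ4.div_const _) hpt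
      _ = (∫ ω, ((w n ω)^2 - s^2)^4 ∂μ) / s^7 := integral_div _ _
  -- moment bounds
  have hμ4nn : 0 ≤ ∫ ω, ((w n ω)^2 - s^2)^4 ∂μ := integral_nonneg fun ω => by positivity
  have hμ4 : ∫ ω, ((w n ω)^2 - s^2)^4 ∂μ ≤ C / (n:ℝ)^2 := by
    rw [le_div_iff₀ hn2]
    have := hmu4 n hn
    linarith [this]
  have hμ3 : |∫ ω, ((w n ω)^2 - s^2)^3 ∂μ| ≤ C / (n:ℝ)^2 := by
    rw [le_div_iff₀ hn2]
    have h := hmu3 n hn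
    rw [abs_mul, abs_of_pos hn2] at h
    linarith [h]
  -- rewrite the goal
  have hgoal : ((n:ℝ) * ∫ ω, ((w n ω)^2 - s^2)^2 ∂μ) / (8 * (n:ℝ) * s^3)
      = (∫ ω, ((w n ω)^2 - s^2)^2 ∂μ) / (8 * s^3) := by
    rw [show (8:ℝ) * (n:ℝ) * s^3 = (n:ℝ) * (8 * s^3) by ring,
      mul_div_mul_left _ _ hn0]
  rw [hgoal]
  have hkey : (∫ ω, w n ω ∂μ) - s + (∫ ω, ((w n ω)^2 - s^2)^2 ∂μ)/(8*s^3)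
      = (∫ ω, (w n ω - A ω) ∂μ) + (∫ ω, ((w n ω)^2 - s^2)^3 ∂μ)/(16*s^5) := by
    rw [integral_sub hIw hIA, hiA, hμ1]
    ring
  rw [hkey]
  have hb5 : b^5 ≤ s^5 := pow_le_pow_left₀ hb.le (hbm n hn).le 5
  have hb7 : b^7 ≤ s^7 := pow_le_pow_left₀ hb.le (hbm n hn).le 7
  have hCn : 0 ≤ C/(n:ℝ)^2 := by positivity
  calc |(∫ ω, (w n ω - A ω) ∂μ) + (∫ ω, ((w n ω)^2 - s^2)^3 ∂μ)/(16*s^5)|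
      ≤ |∫ ω, (w n ω - A ω) ∂μ| + |(∫ ω, ((w n ω)^2 - s^2)^3 ∂μ)/(16*s^5)| := abs_add_le _ _
    _ = |∫ ω, (w n ω - A ω) ∂μ| + |∫ ω, ((w n ω)^2 - s^2)^3 ∂μ|/(16*s^5) := by
        rw [abs_div, abs_of_pos (show (0:ℝ) < 16*s^5 by positivity)]
    _ ≤ (∫ ω, ((w n ω)^2 - s^2)^4 ∂μ) / s^7 + |∫ ω, ((w n ω)^2 - s^2)^3 ∂μ|/(16*s^5) :=
        add_le_add habs le_rfl
    _ ≤ (C/(n:ℝ)^2) / b^7 + (C/(n:ℝ)^2) / (16*b^5) := by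
        refine add_le_add (div_le_div₀ hCn hμ4 (by positivity) hb7)
          (div_le_div₀ hCn hμ3 (by positivity) (by nlinarith [hb5]))
    _ ≤ (C/b^7 + C/b^5) / (n:ℝ)^2 := by
        have e1 : (C/(n:ℝ)^2)/b^7 = (C/b^7)/(n:ℝ)^2 := by ring
        have e2 : (C/(n:ℝ)^2)/(16*b^5) = (C/(16*b^5))/(n:ℝ)^2 := by ring
        rw [e1, e2, ← add_div]
        gcongr
        nlinarith [pow_pos hb 5]
    _ ≤ (⌈C/b^7 + C/b^5⌉₊ : ℝ) / (n:ℝ)^2 := by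
        gcongr
        exact Nat.le_ceil _
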